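/- Let ω(z) = (z-1)e^z for z ∈ ℝ. For any r > 1, there exists a unique nonzero real z_r such that ω(z_r) = ω(-r·z_r), and moreover z_r ∈ (1 - 1/r, 1). -/

import Mathlib

open Real Set

lemma log_bound_aux {x : ℝ} (hx : 1 < x) : 2 * Real.log x < x - 1 / x := by
  have key : StrictMonoOn (fun y : ℝ => y - 1 / y - 2 * Real.log y) (Set.Ici 1) := by
    apply strictMonoOn_of_deriv_pos (convex_Ici 1)
    · intro y hy
      simp only [mem_Ici] at hy
      have hy0 : y ≠ 0 := by linarith
      exact ((continuousAt_id.sub (continuousAt_const.div continuousAt_id hy0)).sub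
        (continuousAt_const.mul (Real.continuousAt_log hy0))).continuousWithinAt
    · intro y hy
      rw [interior_Ici] at hy
      simp only [mem_Ioi] at hy
      have hy0 : y ≠ 0 := by linarith
      have h1 : HasDerivAt (fun y : ℝ => y - 1 / y - 2 * Real.log y)
          (1 - (-(1 / y ^ 2)) - 2 * (1 / y)) y := by
        have ha : HasDerivAt (fun y : ℝ => 1 / y) (-(1 / y ^ 2)) y := by
          simpa [one_div] using hasDerivAt_inv hy0
        have hb : HasDerivAt (fun y : ℝ => 2 * Real.log y) (2 * (1 / y)) y := by
          simpa [one_div] using (Real.hasDerivAt_log hy0).const_mul 2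
        exact ((hasDerivAt_id y).sub ha).sub hb
      rw [h1.deriv]
      have he : 1 - (-(1 / y ^ 2)) - 2 * (1 / y) = ((y - 1) / y) ^ 2 := by
        field_simp; ring
      rw [he]
      have : 0 < (y - 1) / y := div_pos (by linarith) (by linarith)
      positivity
  have h := key Set.self_mem_Ici (le_of_lt hx) hx
  simp only [Real.log_one] at h
  norm_num at h
  rw [one_div]
  linarith

theorem stmt3 (r : ℝ) (hr : 1 < r) (ω : ℝ → ℝ)
    (hω : ∀ z, ω z = (z - 1) * Real.exp z) :
    ∃ z : ℝ, z ∈ Set.Ioo (1 - 1 / r) 1 ∧ z ≠ 0 ∧ ω z = ω (-(r * z)) ∧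
      ∀ w : ℝ, w ≠ 0 → ω w = ω (-(r * w)) → w = z := by
  have hr0 : 0 < r := by linarith
  set s : ℝ := 1 + r with hs
  have hs2 : 2 < s := by rw [hs]; linarith
  have hs0 : 0 < s := by linarith
  set F : ℝ → ℝ := fun z => (z - 1) * Real.exp (s * z) + (r * z + 1) with hFdef
  set G : ℝ → ℝ := fun z => Real.exp (s * z) * (1 + s * (z - 1)) + r with hGdef
  -- derivative machinery
  have hexp : ∀ z : ℝ, HasDerivAt (fun z => Real.exp (s * z)) (s * Real.exp (s * z)) z := by
    intro z
    have h2 : HasDerivAt (fun z : ℝ => s * z) s z := by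
      simpa using (hasDerivAt_id z).const_mul s
    simpa [mul_comm] using h2.exp
  have hF : ∀ z, HasDerivAt F (G z) z := by
    intro z
    have h1 : HasDerivAt (fun z : ℝ => (z - 1) * Real.exp (s * z))
        (1 * Real.exp (s * z) + (z - 1) * (s * Real.exp (s * z))) z :=
      ((hasDerivAt_id z).sub_const 1).mul (hexp z)
    have h2 : HasDerivAt (fun z : ℝ => r * z + 1) (r * 1) z :=
      ((hasDerivAt_id z).const_mul r).add_const 1
    have := h1.add h2
    refine this.congr_deriv ?_
    simp only [hGdef]; ring
  have hG : ∀ z, HasDerivAt G (s * Real.exp (s * z) * (2 + s * (z - 1))) z := by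
    intro z
    have h2 : HasDerivAt (fun z : ℝ => 1 + s * (z - 1)) (s * 1) z :=
      (((hasDerivAt_id z).sub_const 1).const_mul s).const_add 1
    have h1 : HasDerivAt (fun z => Real.exp (s * z) * (1 + s * (z - 1)))
        ((s * Real.exp (s * z)) * (1 + s * (z - 1)) + Real.exp (s * z) * (s * 1)) z :=
      (hexp z).mul h2
    have := h1.add_const r
    refine this.congr_deriv ?_
    ring
  have hFcont : Continuous F := by
    apply Continuous.add
    · exact (continuous_id.sub continuous_const).mul (Real.continuous_exp.comp (continuous_const.mul continuous_id))
    · exact (continuous_const.mul continuous_id).add continuous_const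
  have hGcont : Continuous G := by
    apply Continuous.add
    · exact (Real.continuous_exp.comp (continuous_const.mul continuous_id)).mul
        (continuous_const.add (continuous_const.mul (continuous_id.sub continuous_const)))
    · exact continuous_const
  -- critical point of G
  set c : ℝ := 1 - 2 / s with hc
  have hc0 : 0 < c := by
    rw [hc]
    have : 2 / s < 1 := by rw [div_lt_one hs0]; linarith
    linarith
  have hc1 : c < 1 := by
    rw [hc]; have : 0 < 2 / s := by positivity
    linarith
  have hGanti : StrictAntiOn G (Set.Iic c) := by
    apply strictAntiOn_of_deriv_neg (convex_Iic c) hGcont.continuousOn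
    intro z hz
    rw [interior_Iic] at hz
    rw [(hG z).deriv]
    have hzc : z < c := hz
    have h3 : s * (z - 1) < s * (c - 1) :=
      mul_lt_mul_of_pos_left (by linarith) hs0
    have hci : s * (c - 1) = -2 := by rw [hc]; field_simp; ring
    have h2 : 2 + s * (z - 1) < 0 := by linarith
    have h1 : 0 < s * Real.exp (s * z) := by positivity
    nlinarith
  have hGmono : StrictMonoOn G (Set.Ici c) := by
    apply strictMonoOn_of_deriv_pos (convex_Ici c) hGcont.continuousOn
    intro z hz
    rw [interior_Ici] at hz
    rw [(hG z).deriv]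
    have hcz : c < z := hz
    have h3 : s * (c - 1) < s * (z - 1) :=
      mul_lt_mul_of_pos_left (by linarith) hs0
    have hci : s * (c - 1) = -2 := by rw [hc]; field_simp; ring
    have h2 : 0 < 2 + s * (z - 1) := by linarith
    positivity
  have hG0 : G 0 = 0 := by simp only [hGdef]; simp [hs]
  -- G > 0 for z < 0
  have hGpos_neg : ∀ z < 0, 0 < G z := by
    intro z hz
    have := hGanti (le_of_lt (lt_of_lt_of_le hz (le_of_lt hc0))) (le_of_lt hc0) hz
    rw [hG0] at this; exact this
  -- G < 0 on (0, c]
  have hGneg : ∀ z, 0 < z → z ≤ c → G z < 0 := by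
    intro z h0 hzc
    have := hGanti (le_of_lt hc0) hzc h0
    rw [hG0] at this; exact this
  -- find d in (c,1) with G d = 0
  have hGc : G c < 0 := hGneg c hc0 le_rfl
  have hG1 : 0 < G 1 := by
    simp only [hGdef]
    have : Real.exp (s * 1) > 0 := Real.exp_pos _
    simp only [mul_one, sub_self, mul_zero, add_zero]
    positivity
  obtain ⟨d, hd_mem, hGd⟩ : ∃ d ∈ Set.Ioo c 1, G d = 0 := by
    have := intermediate_value_Ioo (le_of_lt hc1) hGcont.continuousOn (a := c) (b := 1)
    have h0 : (0 : ℝ) ∈ Set.Ioo (G c) (G 1) := ⟨hGc, hG1⟩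
    obtain ⟨d, hd, hgd⟩ := this h0
    exact ⟨d, hd, hgd⟩
  have hdc : c < d := hd_mem.1
  have hd0 : 0 < d := lt_trans hc0 hdc
  have hd1 : d < 1 := hd_mem.2
  -- G < 0 on (0, d), G > 0 on (d, ∞)
  have hGneg' : ∀ z, 0 < z → z < d → G z < 0 := by
    intro z h0 hzd
    rcases le_or_gt z c with h | h
    · exact hGneg z h0 h
    · have := hGmono (le_of_lt h) (le_of_lt hdc) hzd
      rw [hGd] at this; exact this
  have hGpos' : ∀ z, d < z → 0 < G z := by
    intro z hz
    have := hGmono (le_of_lt hdc) (le_trans (le_of_lt hdc) (le_of_lt hz)) hz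
    rw [hGd] at this; exact this
  -- F monotone pieces
  have hFmono_neg : StrictMonoOn F (Set.Iic 0) := by
    apply strictMonoOn_of_deriv_pos (convex_Iic 0) hFcont.continuousOn
    intro z hz
    rw [interior_Iic] at hz
    rw [(hF z).deriv]
    exact hGpos_neg z hz
  have hFanti : StrictAntiOn F (Set.Icc 0 d) := by
    apply strictAntiOn_of_deriv_neg (convex_Icc 0 d) hFcont.continuousOn
    intro z hz
    rw [interior_Icc] at hz
    rw [(hF z).deriv]
    exact hGneg' z hz.1 hz.2
  have hFmono : StrictMonoOn F (Set.Ici d) := by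
    apply strictMonoOn_of_deriv_pos (convex_Ici d) hFcont.continuousOn
    intro z hz
    rw [interior_Ici] at hz
    rw [(hF z).deriv]
    exact hGpos' z hz
  have hF0 : F 0 = 0 := by simp [hFdef]
  have hFd : F d < 0 := by
    have := hFanti ⟨le_refl 0, le_of_lt hd0⟩ ⟨le_of_lt hd0, le_refl d⟩ hd0
    rw [hF0] at this; exact this
  have hF1 : 0 < F 1 := by simp [hFdef]; linarith
  -- root of F in (d, 1)
  obtain ⟨z, hz_mem, hFz⟩ : ∃ z ∈ Set.Ioo d 1, F z = 0 := by
    have := intermediate_value_Ioo (le_of_lt hd1) hFcont.continuousOn (a := d) (b := 1)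
    have h0 : (0 : ℝ) ∈ Set.Ioo (F d) (F 1) := ⟨hFd, hF1⟩
    obtain ⟨z, hz, hfz⟩ := this h0
    exact ⟨z, hz, hfz⟩
  have hzd : d < z := hz_mem.1
  have hz1 : z < 1 := hz_mem.2
  have hz0 : 0 < z := lt_trans hd0 hzd
  -- F (1 - 1/r) < 0
  set a : ℝ := 1 - 1 / r with ha
  have hFa : F a < 0 := by
    have hsa : s * a = r - 1 / r := by
      rw [hs, ha]; field_simp; ring
    have hFa_val : F a = r - Real.exp (s * a) / r := by
      simp only [hFdef]
      rw [ha]; field_simp; ring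
    rw [hFa_val, hsa]
    have hlog := log_bound_aux hr
    have h1 : Real.exp (2 * Real.log r) < Real.exp (r - 1 / r) := Real.exp_lt_exp.mpr hlog
    have h2 : Real.exp (2 * Real.log r) = r ^ 2 := by
      rw [mul_comm, Real.exp_mul, Real.exp_log hr0]
      norm_num
    rw [h2] at h1
    rw [sub_neg, lt_div_iff₀ hr0]
    nlinarith
  have haz : a < z := by
    by_contra h
    push_neg at h
    have haIci : a ∈ Set.Ici d := le_trans (le_of_lt hzd) h
    rcases eq_or_lt_of_le h with he | hlt
    · have : F a = 0 := he ▸ hFz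
      linarith
    · have := hFmono (Set.mem_Ici.mpr (le_of_lt hzd)) haIci hlt
      rw [hFz] at this; linarith
  -- the equivalence ω z = ω (-(r*z)) ↔ F z = 0
  have hkey : ∀ w : ℝ, (w - 1) * Real.exp w - (-(r * w) - 1) * Real.exp (-(r * w))
      = Real.exp (-(r * w)) * F w := by
    intro w
    have h : Real.exp (-(r * w)) * Real.exp (s * w) = Real.exp w := by
      rw [← Real.exp_add]; congr 1; rw [hs]; ring
    simp only [hFdef]
    linear_combination (1 - w) * h
  have hiff : ∀ w : ℝ, (ω w = ω (-(r * w)) ↔ F w = 0) := by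
    intro w
    rw [hω, hω]
    constructor
    · intro h
      have h2 : Real.exp (-(r * w)) * F w = 0 := by
        rw [← hkey w]; linarith
      have := Real.exp_pos (-(r * w))
      exact (mul_eq_zero.mp h2).resolve_left (ne_of_gt this)
    · intro h
      have h2 := hkey w
      rw [h] at h2
      simp only [mul_zero] at h2
      linarith
  refine ⟨z, ⟨haz, hz1⟩, ne_of_gt hz0, (hiff z).mpr hFz, ?_⟩
  intro w hw0 hww
  have hFw : F w = 0 := (hiff w).mp hww
  rcases lt_trichotomy w 0 with h | h | h
  · exfalso
    have := hFmono_neg (Set.mem_Iic.mpr (le_of_lt h)) Set.self_mem_Iic h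
    rw [hF0, hFw] at this; linarith
  · exact absurd h hw0
  · rcases le_or_gt w d with hwd | hwd
    · exfalso
      have := hFanti ⟨le_refl 0, le_of_lt hd0⟩ ⟨le_of_lt h, hwd⟩ h
      rw [hF0, hFw] at this; linarith
    · exact hFmono.injOn (Set.mem_Ici.mpr (le_of_lt hwd)) (Set.mem_Ici.mpr (le_of_lt hzd))
        (by rw [hFw, hFz])
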